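/- Let H be a graph on n vertices with maximum degree Δ, let T ⊆ V(H), let β be a proper (Δ+1)-colouring of H[V∖T], and let σ be a linear order on V(H) putting all vertices of V∖T before all vertices of T. Then the number of frugal extensions of β to H (proper (Δ+1)-colourings extending β such that no colour appears more than once in any open neighbourhood) is at most ∏_{v∈T}(Δ+1−d_σ(v)), where d_σ(v) is the number of neighbours of v preceding v in σ. -/
import Mathlib

private lemma stmt10_aux {X : Type*} [LinearOrder X] {k : ℕ} {s t : Finset X}
    (hst : s = t) (hs : s.card = k) (ht : t.card = k) {a b : X}
    (ha : a ∈ s) (hb : b ∈ t)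
    (h : (s.orderIsoOfFin hs).symm ⟨a, ha⟩ = (t.orderIsoOfFin ht).symm ⟨b, hb⟩) :
    a = b := by
  subst hst
  exact congrArg Subtype.val ((s.orderIsoOfFin hs).symm.injective h)

/-- Let `H` have maximum degree `Δ`, `T ⊆ V`, `β` a proper
`(Δ+1)`-colouring of `H[V∖T]`, and `σ` a linear order putting `V∖T` before `T`.
Then the number of frugal proper extensions of `β` to `H` is at most
`∏_{v∈T} (Δ+1-d_σ(v))`. -/
theorem stmt_10 {V : Type*} [Fintype V] [DecidableEq V] (H : SimpleGraph V)
    [DecidableRel H.Adj] (Δ : ℕ) (hΔ : ∀ v, H.degree v ≤ Δ)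
    (T : Finset V) (β : V → Fin (Δ + 1))
    (hβ : ∀ u v, u ∉ T → v ∉ T → H.Adj u v → β u ≠ β v)
    (σ : V ≃ Fin (Fintype.card V))
    (hσ : ∀ u ∉ T, ∀ v ∈ T, σ u < σ v) :
    Nat.card {α : V → Fin (Δ + 1) //
        (∀ u v, H.Adj u v → α u ≠ α v) ∧
        (∀ v u w, H.Adj v u → H.Adj v w → u ≠ w → α u ≠ α w) ∧
        ∀ v ∉ T, α v = β v} ≤
      ∏ v ∈ T, (Δ + 1 - ((H.neighborFinset v).filter (fun u => σ u < σ v)).card) := by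
  classical
  set E : V → Finset V := fun v => (H.neighborFinset v).filter (fun u => σ u < σ v) with hE_def
  set d : V → ℕ := fun v => (E v).card with hd_def
  set S : (V → Fin (Δ + 1)) → V → Finset (Fin (Δ + 1)) :=
    fun α v => Finset.univ \ (E v).image α with hS_def
  have hEsub : ∀ v, E v ⊆ H.neighborFinset v := fun v => Finset.filter_subset _ _
  have hcard : ∀ (α : V → Fin (Δ + 1)),
      (∀ v u w, H.Adj v u → H.Adj v w → u ≠ w → α u ≠ α w) →
      ∀ v, (S α v).card = Δ + 1 - d v := by
    intro α hf v
    have himg : ((E v).image α).card = d v := by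
      rw [Finset.card_image_of_injOn]
      intro u hu w hw huw
      by_contra hne
      exact hf v u w
        (by have := hEsub v hu; rwa [SimpleGraph.mem_neighborFinset] at this)
        (by have := hEsub v hw; rwa [SimpleGraph.mem_neighborFinset] at this) hne huw
    simp only [hS_def]
    rw [Finset.card_sdiff_of_subset (Finset.subset_univ _), himg]
    simp
  have hmem : ∀ (α : V → Fin (Δ + 1)), (∀ u v, H.Adj u v → α u ≠ α v) →
      ∀ v, α v ∈ S α v := by
    intro α hp v
    simp only [hS_def, Finset.mem_sdiff, Finset.mem_univ, true_and, Finset.mem_image,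
      not_exists, not_and]
    intro u hu
    have hadj : H.Adj v u := by
      have := hEsub v hu; rwa [SimpleGraph.mem_neighborFinset] at this
    exact hp u v hadj.symm
  let Φ : {α : V → Fin (Δ + 1) //
      (∀ u v, H.Adj u v → α u ≠ α v) ∧
      (∀ v u w, H.Adj v u → H.Adj v w → u ≠ w → α u ≠ α w) ∧
      ∀ v ∉ T, α v = β v} → (∀ v : T, Fin (Δ + 1 - d v)) :=
    fun a v => ((S a.1 v).orderIsoOfFin (hcard a.1 a.2.2.1 v)).symm
      ⟨a.1 v, hmem a.1 a.2.1 v⟩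
  have hΦ : Function.Injective Φ := by
    rintro ⟨α, hp, hf, he⟩ ⟨α', hp', hf', he'⟩ h
    simp only [Subtype.mk.injEq]
    have hkey : ∀ n : ℕ, ∀ v : V, (σ v : ℕ) = n → α v = α' v := by
      intro n
      induction n using Nat.strong_induction_on with
      | _ n ih =>
        intro v hv
        by_cases hvT : v ∈ T
        · have hSeq : S α v = S α' v := by
            simp only [hS_def]
            congr 1
            apply Finset.image_congr
            intro u hu
            have hu' : σ u < σ v := by
              simp only [hE_def, Finset.coe_filter, Set.mem_setOf_eq] at hu
              exact hu.2
            have hlt : (σ u : ℕ) < n := by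
              rw [Fin.lt_def] at hu'; omega
            exact ih (σ u) hlt u rfl
          have hthis := congrFun h ⟨v, hvT⟩
          simp only [Φ] at hthis
          exact stmt10_aux hSeq (hcard α hf v) (hcard α' hf' v)
            (hmem α hp v) (hmem α' hp' v) hthis
        · rw [he v hvT, he' v hvT]
    funext v
    exact hkey (σ v) v rfl
  calc Nat.card {α : V → Fin (Δ + 1) //
      (∀ u v, H.Adj u v → α u ≠ α v) ∧
      (∀ v u w, H.Adj v u → H.Adj v w → u ≠ w → α u ≠ α w) ∧
      ∀ v ∉ T, α v = β v}
      ≤ Nat.card (∀ v : T, Fin (Δ + 1 - d v)) :=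
        Nat.card_le_card_of_injective Φ hΦ
    _ = ∏ v ∈ T, (Δ + 1 - d v) := by
        rw [Nat.card_eq_fintype_card, Fintype.card_pi]
        simp only [Fintype.card_fin]
        exact Finset.prod_coe_sort T (fun v => Δ + 1 - d v)
    _ = ∏ v ∈ T, (Δ + 1 - ((H.neighborFinset v).filter (fun u => σ u < σ v)).card) := rfl
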